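/- Let K ≥ 2 and fix c with 2 ≤ c ≤ K. Let x_1, ..., x_{2K-1} satisfy x_{K+c-1} = x_1. Let e_m denote the elementary symmetric polynomial of degree m in the 2K−2 variables {x_{1+r} : 0 ≤ r ≤ 2K−2, r ≠ K+c−2}. Then for every n ∈ {1,...,K}, Σ_{m=1}^{K} (−1)^{K−m} e_{K−m} · h_{m−1}(x_n, ..., x_{n+K-1}) = 0, i.e., the rows of the matrix A_{mn} = h_{m-1}(x_n,...,x_{n+K-1}) are linearly dependent with coefficients (−1)^{K−m} e_{K−m}. -/

import Mathlib

/-- The complete homogeneous symmetric polynomial of degree `d` in the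
variables `y 0, …, y (K-1)`. -/
noncomputable def hpoly {R : Type*} [CommRing R] {K : ℕ} (y : Fin K → R) (d : ℕ) : R :=
  ∑ s : Sym (Fin K) d, ((s : Multiset (Fin K)).map y).prod

section Aux

variable {R : Type*} [CommRing R]

private lemma geom_inv (a : R) :
    (1 - PowerSeries.C a * PowerSeries.X) * PowerSeries.mk (fun n => a ^ n) = 1 := by
  ext n
  rw [sub_mul, one_mul, mul_assoc, map_sub]
  cases n with
  | zero => simp
  | succ n =>
      simp [PowerSeries.coeff_C_mul, PowerSeries.coeff_succ_X_mul, PowerSeries.coeff_mk,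
        pow_succ, mul_comm]

private lemma prod_geom_inv (M : Multiset R) :
    (M.map fun a => 1 - PowerSeries.C a * PowerSeries.X).prod *
      (M.map fun a => PowerSeries.mk (fun n => a ^ n)).prod = 1 := by
  induction M using Multiset.induction with
  | empty => simp
  | cons a M ih =>
      rw [Multiset.map_cons, Multiset.map_cons, Multiset.prod_cons, Multiset.prod_cons,
        mul_mul_mul_comm, geom_inv, ih, mul_one]

private lemma esymm_zero' (M : Multiset R) : M.esymm 0 = 1 := by
  simp [Multiset.esymm, Multiset.powersetCard_zero_left]

private lemma esymm_succ_cons (a : R) (M : Multiset R) (j : ℕ) :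
    (a ::ₘ M).esymm (j + 1) = M.esymm (j + 1) + a * M.esymm j := by
  rw [Multiset.esymm, Multiset.powersetCard_cons, Multiset.map_add, Multiset.sum_add,
    Multiset.map_map]
  congr 1
  rw [Multiset.esymm, ← Multiset.sum_map_mul_left]
  exact congrArg _ (Multiset.map_congr rfl fun t _ => by simp)

private lemma coeff_prod_one_sub (M : Multiset R) (j : ℕ) :
    PowerSeries.coeff j (M.map fun a => 1 - PowerSeries.C a * PowerSeries.X).prod
      = (-1) ^ j * M.esymm j := by
  induction M using Multiset.induction generalizing j with
  | empty =>
      cases j with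
      | zero => simp [esymm_zero']
      | succ j => simp [Multiset.esymm, Multiset.powersetCard_zero_right, PowerSeries.coeff_one]
  | cons a M ih =>
      rw [Multiset.map_cons, Multiset.prod_cons, sub_mul, one_mul, mul_assoc, map_sub]
      cases j with
      | zero =>
          simp [ih, PowerSeries.coeff_C_mul, PowerSeries.coeff_zero_X_mul, esymm_zero']
      | succ j =>
          rw [PowerSeries.coeff_C_mul, PowerSeries.coeff_succ_X_mul, ih, ih, esymm_succ_cons,
            pow_succ]
          ring

private lemma prod_map_eq_prod_pow {K : ℕ} (m : Multiset (Fin K)) (y : Fin K → R) :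
    (m.map y).prod = ∏ i, y i ^ m.count i := by
  classical
  rw [Finset.prod_multiset_map_count]
  refine Finset.prod_subset (Finset.subset_univ _) fun i _ hi => ?_
  rw [Multiset.count_eq_zero_of_notMem (by simpa using hi), pow_zero]

private lemma mk_hpoly {K : ℕ} (y : Fin K → R) :
    PowerSeries.mk (hpoly y) = ∏ i : Fin K, PowerSeries.mk fun n => y i ^ n := by
  classical
  ext d
  rw [PowerSeries.coeff_mk, PowerSeries.coeff_prod, hpoly]
  refine Eq.symm (Finset.sum_bij
    (i := fun (l : Fin K →₀ ℕ) (hl : l ∈ Finset.finsuppAntidiag Finset.univ d) =>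
      (⟨Finsupp.toMultiset l, ?_⟩ : Sym (Fin K) d)) ?_ ?_ ?_ ?_)
  · rw [Finset.mem_finsuppAntidiag] at hl
    rw [Finsupp.card_toMultiset, Finsupp.sum_fintype _ _ (fun _ => rfl)]
    exact hl.1
  · intro a ha; exact Finset.mem_univ _
  · intro l₁ h₁ l₂ h₂ h
    have := congrArg (fun s : Sym (Fin K) d => Multiset.toFinsupp (s : Multiset (Fin K))) h
    simpa using this
  · intro s _
    refine ⟨Multiset.toFinsupp (s : Multiset (Fin K)), ?_, ?_⟩
    · rw [Finset.mem_finsuppAntidiag]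
      refine ⟨?_, Finset.subset_univ _⟩
      have h1 : ∑ a : Fin K, Multiset.count a (s : Multiset (Fin K))
          = Multiset.card (s : Multiset (Fin K)) :=
        Multiset.sum_count_eq_card fun a _ => Finset.mem_univ a
      calc Finset.univ.sum ⇑(Multiset.toFinsupp (s : Multiset (Fin K)))
          = ∑ a : Fin K, Multiset.count a (s : Multiset (Fin K)) := by
            exact Finset.sum_congr rfl fun a _ => Multiset.toFinsupp_apply _ _
        _ = d := h1.trans s.2
    · apply Subtype.ext
      simp
  · intro l hl
    show (∏ i : Fin K, (PowerSeries.coeff (l i)) (PowerSeries.mk fun n => y i ^ n))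
        = ((Finsupp.toMultiset l).map y).prod
    rw [prod_map_eq_prod_pow]
    refine Finset.prod_congr rfl fun i _ => ?_
    rw [PowerSeries.coeff_mk, Finsupp.count_toMultiset]

end Aux

/-- Row dependency: let `2 ≤ c ≤ K` and `x (K+c-1) = x 1`, and let `e_m` be the
elementary symmetric polynomial of degree `m` in the `2K−2` variables
`{x (1+r) : 0 ≤ r ≤ 2K−2, r ≠ K+c−2}`. Then for every `n ∈ {1,…,K}`,
`Σ_{m=1}^{K} (−1)^{K−m} e_{K−m} · h_{m−1}(x n, …, x (n+K-1)) = 0`. -/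
theorem hpoly_rows_dependent {R : Type*} [CommRing R] (K c : ℕ) (hK : 2 ≤ K)
    (hc2 : 2 ≤ c) (hcK : c ≤ K) (x : ℕ → R) (hx : x (K + c - 1) = x 1) :
    ∀ n ∈ Finset.Icc 1 K,
      ∑ m ∈ Finset.Icc 1 K,
        (-1 : R) ^ (K - m) *
          Multiset.esymm
            ((((Finset.range (2 * K - 1)).filter (fun r => r ≠ K + c - 2)).val).map
              (fun r => x (1 + r))) (K - m) *
          hpoly (fun r : Fin K => x (n + (r : ℕ))) (m - 1) = 0 := by
  classical
  intro n hn
  rw [Finset.mem_Icc] at hn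
  obtain ⟨hn1, hnK⟩ := hn
  set y : Fin K → R := fun r : Fin K => x (n + (r : ℕ)) with hy
  set I : Multiset ℕ := ((Finset.range (2 * K - 1)).filter (fun r => r ≠ K + c - 2)).val with hI
  set M : Multiset R := I.map (fun r => x (1 + r)) with hM
  have hmemI : ∀ a, a ∈ I ↔ a < 2 * K - 1 ∧ a ≠ K + c - 2 := by
    intro a
    rw [hI, Finset.mem_val, Finset.mem_filter, Finset.mem_range]
  have hcardI : Multiset.card I = 2 * K - 2 := by
    have h1 : ((Finset.range (2 * K - 1)).filter (fun r => r ≠ K + c - 2))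
        = (Finset.range (2 * K - 1)).erase (K + c - 2) := Finset.filter_ne' _ _
    rw [hI, ← Finset.card_def, h1,
      Finset.card_erase_of_mem (Finset.mem_range.2 (by omega)), Finset.card_range]
    omega
  -- the window index multiset
  set idx : Multiset ℕ := (Multiset.range K).map (fun i => n + i) with hidx
  have hmemidx : ∀ a, a ∈ idx ↔ ∃ i < K, n + i = a := by
    intro a; rw [hidx]; simp [Multiset.mem_map, Multiset.mem_range]
  have hidxnd : idx.Nodup := Multiset.Nodup.map (fun i j h => by omega) (Multiset.nodup_range K)
  have hWidx : Finset.univ.val.map y = idx.map x := by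
    rw [hidx, Multiset.map_map, Fin.univ_def]
    show Multiset.map y ↑(List.finRange K) = Multiset.map (x ∘ fun i => n + i) ↑(List.range K)
    rw [Multiset.map_coe, Multiset.map_coe]
    congr 1
    rw [← List.map_coe_finRange_eq_range, List.map_map]
    rfl
  -- key: the window values form a sub-multiset of M
  have key : ∃ J : Multiset ℕ, Finset.univ.val.map y = J.map x ∧ J ≤ I.map (fun r => 1 + r) := by
    by_cases hnc : n < c
    · refine ⟨idx, hWidx, ?_⟩
      rw [Multiset.le_iff_subset hidxnd]
      intro b hb
      rw [hmemidx] at hb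
      obtain ⟨i, hi, rfl⟩ := hb
      rw [Multiset.mem_map]
      refine ⟨n + i - 1, ?_, by omega⟩
      rw [hmemI]
      omega
    · push_neg at hnc
      have hp : (K + c - 1) ∈ idx := by rw [hmemidx]; exact ⟨K + c - 1 - n, by omega, by omega⟩
      refine ⟨1 ::ₘ idx.erase (K + c - 1), ?_, ?_⟩
      · rw [hWidx, Multiset.map_cons, ← hx]
        conv_lhs => rw [← Multiset.cons_erase hp]
        rw [Multiset.map_cons]
      · have hnd : (1 ::ₘ idx.erase (K + c - 1)).Nodup := by
          rw [Multiset.nodup_cons]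
          refine ⟨fun h1 => ?_, hidxnd.erase _⟩
          have := Multiset.mem_of_mem_erase h1
          rw [hmemidx] at this
          omega
        rw [Multiset.le_iff_subset hnd]
        intro b hb
        rw [Multiset.mem_cons] at hb
        rw [Multiset.mem_map]
        rcases hb with rfl | hb
        · refine ⟨0, ?_, by omega⟩
          rw [hmemI]; omega
        · rw [hidxnd.mem_erase_iff] at hb
          obtain ⟨hbne, hbm⟩ := hb
          rw [hmemidx] at hbm
          obtain ⟨i, hi, rfl⟩ := hbm
          refine ⟨n + i - 1, ?_, by omega⟩
          rw [hmemI]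
          omega
  obtain ⟨J, hJ, hJle⟩ := key
  have hWM : Finset.univ.val.map y ≤ M := by
    rw [hJ, hM]
    have : (I.map fun r => x (1 + r)) = (I.map fun r => 1 + r).map x := by
      rw [Multiset.map_map]; rfl
    rw [this]
    exact Multiset.map_le_map hJle
  obtain ⟨T, hT⟩ := Multiset.le_iff_exists_add.mp hWM
  have hcardT : Multiset.card T = K - 2 := by
    have hc1 := congrArg Multiset.card hT
    rw [hM, Multiset.card_map, hcardI, Multiset.card_add, Multiset.card_map] at hc1
    have : Multiset.card (Finset.univ.val : Multiset (Fin K)) = K := by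
      rw [← Finset.card_def, Finset.card_univ, Fintype.card_fin]
    rw [this] at hc1
    omega
  -- the power series computation
  have hmain : PowerSeries.mk (hpoly y) * (M.map fun a => 1 - PowerSeries.C a * PowerSeries.X).prod
      = (T.map fun a => 1 - PowerSeries.C a * PowerSeries.X).prod := by
    have hWgeom : PowerSeries.mk (hpoly y)
        = ((Finset.univ.val.map y).map fun a => PowerSeries.mk fun n => a ^ n).prod := by
      rw [mk_hpoly, Finset.prod, Multiset.map_map]
      rfl
    rw [hWgeom, hT, Multiset.map_add, Multiset.prod_add]
    calc ((Finset.univ.val.map y).map fun a => PowerSeries.mk fun n => a ^ n).prod *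
          (((Finset.univ.val.map y).map fun a => 1 - PowerSeries.C a * PowerSeries.X).prod *
            (T.map fun a => 1 - PowerSeries.C a * PowerSeries.X).prod)
        = (((Finset.univ.val.map y).map fun a => 1 - PowerSeries.C a * PowerSeries.X).prod *
            ((Finset.univ.val.map y).map fun a => PowerSeries.mk fun n => a ^ n).prod) *
          (T.map fun a => 1 - PowerSeries.C a * PowerSeries.X).prod := by ring
      _ = (T.map fun a => 1 - PowerSeries.C a * PowerSeries.X).prod := by
          rw [prod_geom_inv, one_mul]
  have h0 : PowerSeries.coeff (K - 1)
      (PowerSeries.mk (hpoly y) * (M.map fun a => 1 - PowerSeries.C a * PowerSeries.X).prod)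
      = 0 := by
    rw [hmain, coeff_prod_one_sub, Multiset.esymm,
      Multiset.powersetCard_eq_empty _ (by omega : Multiset.card T < K - 1)]
    simp
  rw [PowerSeries.coeff_mul, Finset.Nat.sum_antidiagonal_eq_sum_range_succ_mk] at h0
  rw [show (K - 1).succ = K by omega] at h0
  simp only [PowerSeries.coeff_mk, coeff_prod_one_sub] at h0
  calc ∑ m ∈ Finset.Icc 1 K,
        (-1 : R) ^ (K - m) * M.esymm (K - m) * hpoly y (m - 1)
      = ∑ k ∈ Finset.range K, hpoly y k * ((-1 : R) ^ (K - 1 - k) * M.esymm (K - 1 - k)) := by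
        refine Finset.sum_nbij' (fun m => m - 1) (fun k => k + 1) ?_ ?_ ?_ ?_ ?_
        · intro m hm; rw [Finset.mem_Icc] at hm; rw [Finset.mem_range]
          show m - 1 < K; omega
        · intro k hk; rw [Finset.mem_range] at hk; rw [Finset.mem_Icc]
          show 1 ≤ k + 1 ∧ k + 1 ≤ K; omega
        · intro m hm; rw [Finset.mem_Icc] at hm; show m - 1 + 1 = m; omega
        · intro k hk; show k + 1 - 1 = k; omega
        · intro m hm
          rw [Finset.mem_Icc] at hm
          show (-1 : R) ^ (K - m) * M.esymm (K - m) * hpoly y (m - 1)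
            = hpoly y (m - 1) * ((-1 : R) ^ (K - 1 - (m - 1)) * M.esymm (K - 1 - (m - 1)))
          have h2 : K - 1 - (m - 1) = K - m := by omega
          rw [h2]
          ring
    _ = 0 := h0
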